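/- Let x | z=0 ~ N(μ₀, σ²) and x | z=1 ~ N(μ₁, σ²) with threshold classifiers accepting iff x ≥ τ_z, and fix δ > 0. If the classifier satisfies Equal Improvability with budget δ (using cost |Δx|), then it satisfies Equal Recourse: E[τ₀ - x | x < τ₀, z=0] = E[τ₁ - x | x < τ₁, z=1]. -/

import Mathlib

/-- Standard normal PDF. -/
noncomputable def stdPdf (x : ℝ) : ℝ := Real.exp (-(x ^ 2) / 2) / Real.sqrt (2 * Real.pi)

/-- Standard normal CDF. -/
noncomputable def stdCdf (x : ℝ) : ℝ := ∫ t in Set.Iic x, stdPdf t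

/-- Gaussian density with mean μ and standard deviation σ. -/
noncomputable def gaussPdf (μ σ x : ℝ) : ℝ :=
  Real.exp (-((x - μ) ^ 2) / (2 * σ ^ 2)) / (σ * Real.sqrt (2 * Real.pi))

open MeasureTheory Real Set Filter Topology

lemma stdPdf_pos (x : ℝ) : 0 < stdPdf x :=
  div_pos (Real.exp_pos _) (Real.sqrt_pos.2 (by positivity))

lemma continuous_stdPdf : Continuous stdPdf := by
  unfold stdPdf; fun_prop

lemma integrable_stdPdf : Integrable stdPdf := by
  have h := (integrable_exp_neg_mul_sq (by norm_num : (0:ℝ) < 1/2)).div_const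
    (Real.sqrt (2 * Real.pi))
  refine h.congr (Eventually.of_forall fun x => ?_)
  unfold stdPdf; ring_nf

lemma integrable_mul_stdPdf : Integrable (fun x => x * stdPdf x) := by
  have h := (integrable_mul_exp_neg_mul_sq (by norm_num : (0:ℝ) < 1/2)).div_const
    (Real.sqrt (2 * Real.pi))
  refine h.congr (Eventually.of_forall fun x => ?_)
  unfold stdPdf; ring_nf

lemma hasDerivAt_stdCdf (x : ℝ) : HasDerivAt stdCdf (stdPdf x) x := by
  have hF : HasDerivAt (fun u => ∫ t in (0:ℝ)..u, stdPdf t) (stdPdf x) x :=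
    intervalIntegral.integral_hasDerivAt_right
      (integrable_stdPdf.intervalIntegrable)
      (continuous_stdPdf.stronglyMeasurableAtFilter _ _)
      continuous_stdPdf.continuousAt
  have h2 : HasDerivAt (fun u => stdCdf 0 + ∫ t in (0:ℝ)..u, stdPdf t) (stdPdf x) x :=
    hF.const_add _
  refine h2.congr_of_eventuallyEq (Eventually.of_forall fun u => ?_)
  have := intervalIntegral.integral_Iic_sub_Iic
    (integrable_stdPdf.integrableOn (s := Iic (0:ℝ)))
    (integrable_stdPdf.integrableOn (s := Iic u))
  simp only [stdCdf]
  linarith [this]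

lemma hasDerivAt_stdPdf (x : ℝ) : HasDerivAt stdPdf (-x * stdPdf x) x := by
  have h1 : HasDerivAt (fun y : ℝ => -(y ^ 2) / 2) (-x) x := by
    have := ((hasDerivAt_pow 2 x).neg).div_const 2
    refine this.congr_deriv ?_
    ring
  have h2 := (h1.exp).div_const (Real.sqrt (2 * Real.pi))
  refine h2.congr_deriv ?_
  unfold stdPdf; ring

lemma stdCdf_pos (x : ℝ) : 0 < stdCdf x := by
  rw [stdCdf, setIntegral_pos_iff_support_of_nonneg_ae
    (Eventually.of_forall fun t => (stdPdf_pos t).le) integrable_stdPdf.integrableOn]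
  have hs : Function.support stdPdf = univ := by
    ext t; simp [Function.mem_support, (stdPdf_pos t).ne']
  rw [hs, univ_inter, Real.volume_Iic]
  simp

lemma tendsto_sq_atBot : Tendsto (fun x : ℝ => x ^ 2) atBot atTop := by
  have h : Tendsto (fun x : ℝ => (-x) ^ 2) atBot atTop :=
    (tendsto_pow_atTop two_ne_zero).comp tendsto_neg_atBot_atTop
  simpa [neg_sq] using h

lemma tendsto_stdPdf_atBot : Tendsto stdPdf atBot (𝓝 0) := by
  have h1 : Tendsto (fun x : ℝ => -(x ^ 2) / 2) atBot atBot :=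
    (tendsto_neg_atTop_atBot.comp tendsto_sq_atBot).atBot_div_const (by norm_num)
  have h2 := (Real.tendsto_exp_atBot.comp h1).div_const (Real.sqrt (2 * Real.pi))
  rw [zero_div] at h2
  exact h2

lemma integral_mul_stdPdf_Iic (x : ℝ) : ∫ t in Iic x, t * stdPdf t = -stdPdf x := by
  have ht : Tendsto (fun t => -stdPdf t) atBot (𝓝 0) := by
    simpa using tendsto_stdPdf_atBot.neg
  have h := integral_Iic_of_hasDerivAt_of_tendsto'
    (f := fun t => -stdPdf t) (f' := fun t => t * stdPdf t) (a := x)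
    (fun t _ => ((hasDerivAt_stdPdf t).neg).congr_deriv (by ring))
    integrable_mul_stdPdf.integrableOn ht
  simpa using h

lemma stdCdf_le_mills {x : ℝ} (hx : x < 0) : stdCdf x ≤ stdPdf x / (-x) := by
  have key : stdCdf x ≤ ∫ t in Iic x, (t / x) * stdPdf t := by
    rw [stdCdf]
    apply setIntegral_mono_on integrable_stdPdf.integrableOn
    · exact ((integrable_mul_stdPdf.div_const x).congr
        (Eventually.of_forall fun t => by ring)).integrableOn
    · exact measurableSet_Iic
    · intro t ht
      have h1 : (1 : ℝ) ≤ t / x := by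
        rw [le_div_iff_of_neg hx]
        simpa using ht
      nlinarith [stdPdf_pos t]
  have h2 : ∫ t in Iic x, (t / x) * stdPdf t = -stdPdf x / x := by
    rw [show (fun t => (t / x) * stdPdf t) = fun t => (t * stdPdf t) / x from
      funext fun t => by ring]
    rw [integral_div, integral_mul_stdPdf_Iic]
  rw [h2] at key
  rw [div_neg, ← neg_div]
  exact key

lemma tendsto_stdCdf_atBot : Tendsto stdCdf atBot (𝓝 0) := by
  have hub : ∀ᶠ x in atBot, stdCdf x ≤ stdPdf x := by
    filter_upwards [eventually_le_atBot (-1:ℝ)] with x hx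
    have h := stdCdf_le_mills (show x < 0 by linarith)
    have h2 : stdPdf x / (-x) ≤ stdPdf x := by
      rw [div_le_iff₀ (by linarith)]
      nlinarith [stdPdf_pos x]
    linarith
  exact tendsto_of_tendsto_of_tendsto_of_le_of_le' tendsto_const_nhds tendsto_stdPdf_atBot
    (Eventually.of_forall fun x => (stdCdf_pos x).le) hub

lemma tendsto_mul_stdCdf_atBot : Tendsto (fun x => x * stdCdf x) atBot (𝓝 0) := by
  have hub : ∀ᶠ x in atBot, x * stdCdf x ≤ 0 := by
    filter_upwards [eventually_lt_atBot (0:ℝ)] with x hx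
    exact mul_nonpos_of_nonpos_of_nonneg hx.le (stdCdf_pos x).le
  have hlb : ∀ᶠ x in atBot, -stdPdf x ≤ x * stdCdf x := by
    filter_upwards [eventually_lt_atBot (0:ℝ)] with x hx
    have h := stdCdf_le_mills hx
    rw [div_neg, ← neg_div, le_div_iff_of_neg hx] at h
    linarith
  have h0 : Tendsto (fun x => -stdPdf x) atBot (𝓝 0) := by
    simpa using tendsto_stdPdf_atBot.neg
  exact tendsto_of_tendsto_of_tendsto_of_le_of_le' h0 tendsto_const_nhds hlb hub

noncomputable def millsAux (x : ℝ) : ℝ := x * stdCdf x + stdPdf x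

lemma hasDerivAt_millsAux (x : ℝ) : HasDerivAt millsAux (stdCdf x) x := by
  have h := ((hasDerivAt_id x).mul (hasDerivAt_stdCdf x)).add (hasDerivAt_stdPdf x)
  refine h.congr_deriv ?_
  simp only [id_eq, one_mul]
  ring

lemma millsAux_pos (x : ℝ) : 0 < millsAux x := by
  have hmono : StrictMono millsAux :=
    strictMono_of_hasDerivAt_pos hasDerivAt_millsAux stdCdf_pos
  have htend : Tendsto millsAux atBot (𝓝 0) := by
    have h := tendsto_mul_stdCdf_atBot.add tendsto_stdPdf_atBot
    rw [add_zero] at h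
    exact h
  have h1 : 0 ≤ millsAux (x - 1) := by
    refine le_of_tendsto htend ?_
    filter_upwards [eventually_le_atBot (x - 1)] with y hy
    exact hmono.monotone hy
  linarith [hmono (show x - 1 < x by linarith)]

noncomputable def mills (x : ℝ) : ℝ := stdPdf x / stdCdf x

lemma strictAnti_mills : StrictAnti mills := by
  refine strictAnti_of_hasDerivAt_neg (f' := fun x => -(stdPdf x * millsAux x) / (stdCdf x)^2)
    (fun x => ?_) (fun x => ?_)
  · have h := (hasDerivAt_stdPdf x).div (hasDerivAt_stdCdf x) (stdCdf_pos x).ne'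
    refine h.congr_deriv ?_
    unfold millsAux; ring
  · apply div_neg_of_neg_of_pos
    · simp only [neg_neg, neg_lt_zero]
      exact mul_pos (stdPdf_pos x) (millsAux_pos x)
    · exact pow_pos (stdCdf_pos x) 2

lemma strictMono_ratio {c : ℝ} (hc : 0 < c) :
    StrictMono (fun a => stdCdf (a - c) / stdCdf a) := by
  refine strictMono_of_hasDerivAt_pos
    (f' := fun a => (stdPdf (a - c) * stdCdf a - stdCdf (a - c) * stdPdf a) / (stdCdf a)^2)
    (fun a => ?_) (fun a => ?_)
  · have h1 : HasDerivAt (fun a => stdCdf (a - c)) (stdPdf (a - c)) a := by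
      have := (hasDerivAt_stdCdf (a - c)).comp a ((hasDerivAt_id a).sub_const c)
      simpa [Function.comp_def] using this
    exact h1.div (hasDerivAt_stdCdf a) (stdCdf_pos a).ne'
  · apply div_pos _ (pow_pos (stdCdf_pos a) 2)
    have hm : mills a < mills (a - c) := strictAnti_mills (by linarith)
    rw [mills, mills, div_lt_div_iff₀ (stdCdf_pos a) (stdCdf_pos (a - c))] at hm
    linarith

lemma gaussPdf_eq {σ : ℝ} (hσ : 0 < σ) (μ x : ℝ) :
    gaussPdf μ σ x = stdPdf ((x - μ) / σ) / σ := by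
  unfold gaussPdf stdPdf
  have h1 : -(((x - μ) / σ) ^ 2) / 2 = -((x - μ) ^ 2) / (2 * σ ^ 2) := by
    rw [div_pow]
    ring
  rw [h1, div_div, mul_comm (Real.sqrt (2 * Real.pi)) σ]

lemma tendsto_affine_atBot {σ : ℝ} (hσ : 0 < σ) (μ : ℝ) :
    Tendsto (fun x => (x - μ) / σ) atBot atBot := by
  apply Tendsto.atBot_div_const hσ
  exact tendsto_atBot_add_const_right _ _ tendsto_id

lemma hasDerivAt_stdCdf_affine {σ : ℝ} (hσ : 0 < σ) (μ x : ℝ) :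
    HasDerivAt (fun y => stdCdf ((y - μ) / σ)) (gaussPdf μ σ x) x := by
  have hin : HasDerivAt (fun y : ℝ => (y - μ) / σ) (1 / σ) x := by
    simpa using ((hasDerivAt_id x).sub_const μ).div_const σ
  have h := (hasDerivAt_stdCdf ((x - μ) / σ)).comp x hin
  refine h.congr_deriv ?_
  rw [gaussPdf_eq hσ]; ring

lemma integrable_gaussPdf {σ : ℝ} (hσ : 0 < σ) (μ : ℝ) :
    Integrable (gaussPdf μ σ) := by
  have hb : (0:ℝ) < 1 / (2 * σ ^ 2) := by positivity
  have h := ((integrable_exp_neg_mul_sq hb).comp_sub_right μ).div_const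
    (σ * Real.sqrt (2 * Real.pi))
  refine h.congr (Eventually.of_forall fun x => ?_)
  beta_reduce
  unfold gaussPdf
  rw [show -(1 / (2 * σ ^ 2)) * (x - μ) ^ 2 = -((x - μ) ^ 2) / (2 * σ ^ 2) by ring]

lemma integrable_mul_gaussPdf {σ : ℝ} (hσ : 0 < σ) (μ : ℝ) :
    Integrable (fun x => x * gaussPdf μ σ x) := by
  have hb : (0:ℝ) < 1 / (2 * σ ^ 2) := by positivity
  have h1 := ((integrable_mul_exp_neg_mul_sq hb).comp_sub_right μ).div_const
    (σ * Real.sqrt (2 * Real.pi))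
  have h2 : Integrable (fun x => (x - μ) * gaussPdf μ σ x) := by
    refine h1.congr (Eventually.of_forall fun x => ?_)
    beta_reduce
    unfold gaussPdf
    rw [show -(1 / (2 * σ ^ 2)) * (x - μ) ^ 2 = -((x - μ) ^ 2) / (2 * σ ^ 2) by ring,
      mul_div_assoc]
  have h3 := h2.add ((integrable_gaussPdf hσ μ).const_mul μ)
  refine h3.congr (Eventually.of_forall fun x => ?_)
  simp only [Pi.add_apply]
  ring

lemma tendsto_gaussPdf_atBot {σ : ℝ} (hσ : 0 < σ) (μ : ℝ) :
    Tendsto (fun x => gaussPdf μ σ x) atBot (𝓝 0) := by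
  have h := (tendsto_stdPdf_atBot.comp (tendsto_affine_atBot hσ μ)).div_const σ
  rw [zero_div] at h
  refine h.congr fun x => ?_
  exact (gaussPdf_eq hσ μ x).symm

lemma integral_gaussPdf_Iic {σ : ℝ} (hσ : 0 < σ) (μ τ : ℝ) :
    ∫ x in Iic τ, gaussPdf μ σ x = stdCdf ((τ - μ) / σ) := by
  have htend : Tendsto (fun y => stdCdf ((y - μ) / σ)) atBot (𝓝 0) :=
    tendsto_stdCdf_atBot.comp (tendsto_affine_atBot hσ μ)
  have h := integral_Iic_of_hasDerivAt_of_tendsto' (a := τ)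
    (fun x _ => hasDerivAt_stdCdf_affine hσ μ x)
    (integrable_gaussPdf hσ μ).integrableOn htend
  simpa using h

lemma hasDerivAt_gaussPdf {σ : ℝ} (hσ : 0 < σ) (μ x : ℝ) :
    HasDerivAt (gaussPdf μ σ) (-((x - μ) / σ ^ 2) * gaussPdf μ σ x) x := by
  have h1 : HasDerivAt (fun y : ℝ => (y - μ) ^ 2) (2 * (x - μ)) x := by
    have := (hasDerivAt_pow 2 (x - μ)).comp x ((hasDerivAt_id x).sub_const μ)
    simpa [Function.comp_def] using this
  have hin : HasDerivAt (fun y : ℝ => -((y - μ) ^ 2) / (2 * σ ^ 2))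
      (-((x - μ) / σ ^ 2)) x := by
    have h2 := (h1.neg).div_const (2 * σ ^ 2)
    refine h2.congr_deriv ?_
    field_simp
  have h3 := (hin.exp).div_const (σ * Real.sqrt (2 * Real.pi))
  refine h3.congr_deriv ?_
  unfold gaussPdf; ring

lemma integral_mul_gaussPdf_Iic {σ : ℝ} (hσ : 0 < σ) (μ τ : ℝ) :
    ∫ x in Iic τ, x * gaussPdf μ σ x
      = μ * stdCdf ((τ - μ) / σ) - σ ^ 2 * gaussPdf μ σ τ := by
  have hK : ∀ x, HasDerivAt (fun y => μ * stdCdf ((y - μ) / σ) - σ ^ 2 * gaussPdf μ σ y)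
      (x * gaussPdf μ σ x) x := by
    intro x
    have h := ((hasDerivAt_stdCdf_affine hσ μ x).const_mul μ).sub
      ((hasDerivAt_gaussPdf hσ μ x).const_mul (σ ^ 2))
    refine h.congr_deriv ?_
    field_simp
    ring
  have htend : Tendsto (fun y => μ * stdCdf ((y - μ) / σ) - σ ^ 2 * gaussPdf μ σ y)
      atBot (𝓝 0) := by
    have h1 := (tendsto_stdCdf_atBot.comp (tendsto_affine_atBot hσ μ)).const_mul μ
    have h2 := (tendsto_gaussPdf_atBot hσ μ).const_mul (σ ^ 2)
    simpa using h1.sub h2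
  have h := integral_Iic_of_hasDerivAt_of_tendsto' (a := τ) (fun x _ => hK x)
    (integrable_mul_gaussPdf hσ μ).integrableOn htend
  simpa using h

lemma recourse_eq {σ : ℝ} (hσ : 0 < σ) (μ τ : ℝ) :
    (∫ x in Iio τ, (τ - x) * gaussPdf μ σ x) / (∫ x in Iio τ, gaussPdf μ σ x)
      = σ * millsAux ((τ - μ) / σ) / stdCdf ((τ - μ) / σ) := by
  rw [← integral_Iic_eq_integral_Iio, ← integral_Iic_eq_integral_Iio,
    integral_gaussPdf_Iic hσ μ τ]
  have hnum : ∫ x in Iic τ, (τ - x) * gaussPdf μ σ x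
      = σ * millsAux ((τ - μ) / σ) := by
    simp only [show ∀ x, (τ - x) * gaussPdf μ σ x
        = τ * gaussPdf μ σ x - x * gaussPdf μ σ x from fun x => by ring]
    rw [integral_sub (((integrable_gaussPdf hσ μ).const_mul τ).integrableOn)
      (integrable_mul_gaussPdf hσ μ).integrableOn,
      integral_const_mul, integral_gaussPdf_Iic hσ μ τ, integral_mul_gaussPdf_Iic hσ μ τ]
    rw [millsAux, gaussPdf_eq hσ]
    field_simp
    ring
  rw [hnum]

/-- For Gaussian groups with common variance, Equal Improvability implies Equal Recourse:
the conditional expected recourse E[τ_z - x | x < τ_z, z] is equal for both groups. -/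
theorem ei_implies_er (μ₀ μ₁ σ δ τ₀ τ₁ : ℝ) (hσ : 0 < σ) (hδ : 0 < δ)
    (hEI : stdCdf ((τ₀ - δ - μ₀) / σ) / stdCdf ((τ₀ - μ₀) / σ)
         = stdCdf ((τ₁ - δ - μ₁) / σ) / stdCdf ((τ₁ - μ₁) / σ)) :
    (∫ x in Set.Iio τ₀, (τ₀ - x) * gaussPdf μ₀ σ x) / (∫ x in Set.Iio τ₀, gaussPdf μ₀ σ x)
      = (∫ x in Set.Iio τ₁, (τ₁ - x) * gaussPdf μ₁ σ x) /
        (∫ x in Set.Iio τ₁, gaussPdf μ₁ σ x) := by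
  have hc : (0:ℝ) < δ / σ := by positivity
  have key : (τ₀ - μ₀) / σ = (τ₁ - μ₁) / σ := by
    apply (strictMono_ratio hc).injective
    have e0 : (τ₀ - δ - μ₀) / σ = (τ₀ - μ₀) / σ - δ / σ := by ring
    have e1 : (τ₁ - δ - μ₁) / σ = (τ₁ - μ₁) / σ - δ / σ := by ring
    rw [e0, e1] at hEI
    exact hEI
  rw [recourse_eq hσ μ₀ τ₀, recourse_eq hσ μ₁ τ₁, key]
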